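/- Let (X, 𝒞) be an instance of 3-SAT, let (G, k) be the reduction graph built from (X, 𝒞), and define 𝒫 = {{v_x, v_x̄} : x ∈ X} and 𝒯 = {{u^C_p, u^C_q, u^C_r} : C = {p,q,r} ∈ 𝒞}. Then (G, 𝒫, 𝒯) is a valid instance of Partitioned Vertex Cover, and G has a vertex cover of size at most k if and only if (G, 𝒫, 𝒯) has a solution. -/

import Mathlib

open SimpleGraph

universe u

/-- A matching: a set of edges of `G` that are pairwise vertex-disjoint. -/
def IsMatching {W : Type u} (G : SimpleGraph W) (M : Set (Sym2 W)) : Prop :=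
  M ⊆ G.edgeSet ∧ ∀ e ∈ M, ∀ e' ∈ M, e ≠ e' → ∀ v : W, v ∈ e → v ∉ e'

/-- `v` is matched by `M`. -/
def Matched {W : Type u} (M : Set (Sym2 W)) (v : W) : Prop := ∃ w : W, s(v, w) ∈ M

open scoped Classical in
/-- `rank G pref M v = pref v (M(v))`, with the convention `|N(v)|+1` if `v` is unmatched. -/
noncomputable def rank {W : Type u} (G : SimpleGraph W) (pref : W → W → ℕ)
    (M : Set (Sym2 W)) (v : W) : ℕ :=
  if h : ∃ w : W, s(v, w) ∈ M then pref v h.choose else (G.neighborSet v).ncard + 1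

/-- The number of vertices preferring `M` over `M'`. -/
noncomputable def vote {W : Type u} (G : SimpleGraph W) (pref : W → W → ℕ)
    (M M' : Set (Sym2 W)) : ℕ :=
  {v : W | rank G pref M v < rank G pref M' v}.ncard

/-- A popular matching: no other matching is more popular. -/
def IsPopular {W : Type u} (G : SimpleGraph W) (pref : W → W → ℕ) (M : Set (Sym2 W)) : Prop :=
  IsMatching G M ∧
    ∀ M' : Set (Sym2 W), IsMatching G M' → vote G pref M' M ≤ vote G pref M M'

/-- Each vertex has a strict preference list: `pref v` is a bijection from the
neighborhood of `v` onto `{1, …, |N(v)|}`. -/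
def HasPref {W : Type u} (G : SimpleGraph W) (pref : W → W → ℕ) : Prop :=
  ∀ v : W, Set.BijOn (pref v) (G.neighborSet v) (Set.Icc 1 (G.neighborSet v).ncard)

/-- The edge `e ∉ M` is labeled `+2` by `label_M` (given rank function `rk`):
both endpoints prefer each other over their status in `M`. -/
def EdgePlus {W : Type u} (pref : W → W → ℕ) (rk : W → ℕ) (e : Sym2 W) : Prop :=
  ∃ x y : W, e = s(x, y) ∧ pref x y < rk x ∧ pref y x < rk y

/-- The edge `e ∉ M` is labeled `-2` by `label_M` (given rank function `rk`):
both endpoints prefer their status in `M` over each other. -/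
def EdgeMinus {W : Type u} (pref : W → W → ℕ) (rk : W → ℕ) (e : Sym2 W) : Prop :=
  ∃ x y : W, e = s(x, y) ∧ rk x < pref x y ∧ rk y < pref y x

/-- The graph `G_M`: the spanning subgraph of `G` consisting of the edges of `M`
together with the edges not labeled `-2`. -/
def GMgraph {W : Type u} (G : SimpleGraph W) (pref : W → W → ℕ) (M : Set (Sym2 W)) :
    SimpleGraph W where
  Adj x y := G.Adj x y ∧ (s(x, y) ∈ M ∨ ¬ EdgeMinus pref (rank G pref M) s(x, y))
  symm := by
    constructor
    intro x y h
    refine ⟨h.1.symm, ?_⟩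
    rw [Sym2.eq_swap]
    exact h.2
  loopless := ⟨fun x h => G.irrefl h.1⟩

/-- Consecutive edges alternate between `M` and non-`M`. -/
def altRel {W : Type u} (M : Set (Sym2 W)) (e e' : Sym2 W) : Prop := e ∈ M ↔ e' ∉ M

/-- An alternating path (with respect to `M`) in a graph `G'`. -/
def IsAltPath {W : Type u} (M : Set (Sym2 W)) {G' : SimpleGraph W} {x y : W}
    (p : G'.Walk x y) : Prop :=
  p.IsPath ∧ List.Chain' (altRel M) p.edges ∧
    (∀ e, p.edges.head? = some e → e ∉ M → ¬ Matched M x) ∧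
    (∀ e, p.edges.getLast? = some e → e ∉ M → ¬ Matched M y)

/-- An alternating cycle (with respect to `M`) in a graph `G'`:
the edges alternate cyclically between `M` and non-`M`. -/
def IsAltCycle {W : Type u} (M : Set (Sym2 W)) {G' : SimpleGraph W} {x : W}
    (p : G'.Walk x x) : Prop :=
  p.IsCycle ∧ List.Chain' (altRel M) (p.edges ++ p.edges.take 1)

/-- `l` contains at least one edge labeled `+2`. -/
def OnePlusEdge {W : Type u} (pref : W → W → ℕ) (rk : W → ℕ) (l : List (Sym2 W)) : Prop :=
  ∃ e ∈ l, EdgePlus pref rk e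

/-- `l` contains at least two edges labeled `+2`. -/
def TwoPlusEdges {W : Type u} (pref : W → W → ℕ) (rk : W → ℕ) (l : List (Sym2 W)) : Prop :=
  ∃ e ∈ l, ∃ e' ∈ l, e ≠ e' ∧ EdgePlus pref rk e ∧ EdgePlus pref rk e'

/-- A vertex cover. -/
def IsVC {V : Type u} (G : SimpleGraph V) (U : Set V) : Prop :=
  ∀ ⦃x y : V⦄, G.Adj x y → x ∈ U ∨ y ∈ U
/-- An instance of Partitioned Vertex Cover: `G` is a finite simple graph, `P` is a
collection of pairwise disjoint edges of `G`, `T` is a collection of pairwise disjoint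
3-element vertex sets each inducing a triangle in `G`, and every vertex of `G` lies in
exactly one member of `P ∪ T`. -/
def IsPVC {V : Type u} (G : SimpleGraph V) (P : Set (Sym2 V)) (T : Set (Finset V)) : Prop :=
  Finite V ∧
  P ⊆ G.edgeSet ∧
  (∀ e ∈ P, ∀ e' ∈ P, e ≠ e' → ∀ v : V, v ∈ e → v ∉ e') ∧
  (∀ t ∈ T, t.card = 3) ∧
  (∀ t ∈ T, ∀ x ∈ t, ∀ y ∈ t, x ≠ y → G.Adj x y) ∧
  (∀ t ∈ T, ∀ t' ∈ T, t ≠ t' → ∀ v : V, v ∈ t → v ∉ t') ∧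
  (∀ v : V, (∃ e ∈ P, v ∈ e) ∨ (∃ t ∈ T, v ∈ t)) ∧
  (∀ v : V, ¬ ((∃ e ∈ P, v ∈ e) ∧ (∃ t ∈ T, v ∈ t)))

/-- A solution of a Partitioned Vertex Cover instance: a vertex cover `U` with
`|U ∩ P| = 1` for every pair `P` and `|U ∩ T| = 2` for every triple `T`. -/
def IsPVCSolution {V : Type u} (G : SimpleGraph V) (P : Set (Sym2 V)) (T : Set (Finset V))
    (U : Set V) : Prop :=
  IsVC G U ∧
  (∀ e ∈ P, {x : V | x ∈ e ∧ x ∈ U}.ncard = 1) ∧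
  (∀ t ∈ T, {x : V | x ∈ t ∧ x ∈ U}.ncard = 2)

/-- The vertices of the graph `H` built from a Partitioned Vertex Cover instance:
`a i`, `b i`, `c i`, `d i` for a vertex `i` of `G`; `u i j` is the vertex `u^e_i` for the
edge `e = {i,j}` of `G`; `f i j` is the vertex `f_{ij}` for the pair `{i,j} ∈ P`. -/
inductive Gad (V : Type u) : Type u where
  | a : V → Gad V
  | b : V → Gad V
  | c : V → Gad V
  | d : V → Gad V
  | u : V → V → Gad V
  | f : V → V → Gad V
deriving DecidableEq

/-- Which formal gadget vertices are really vertices of `H`. -/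
def Gad.valid {V : Type u} (G : SimpleGraph V) (P : Set (Sym2 V)) : Gad V → Prop
  | .u i j => G.Adj i j
  | .f i j => s(i, j) ∈ P
  | _ => True

/-- The edges of `H`, up to symmetry. -/
inductive HBase {V : Type u} (G : SimpleGraph V) (P : Set (Sym2 V)) (T : Set (Finset V)) :
    Gad V → Gad V → Prop where
  | da (i : V) : HBase G P T (.d i) (.a i)
  | ab (i : V) : HBase G P T (.a i) (.b i)
  | ac (i : V) : HBase G P T (.a i) (.c i)
  | bc (i : V) : HBase G P T (.b i) (.c i)
  | uu {i j : V} (h : G.Adj i j) : HBase G P T (.u i j) (.u j i)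
  | bu {i j : V} (h : G.Adj i j) : HBase G P T (.b i) (.u i j)
  | df {i j : V} (h : s(i, j) ∈ P) : HBase G P T (.d i) (.f i j)
  | fc {i j : V} (h : s(i, j) ∈ P) : HBase G P T (.f i j) (.c j)
  | cd {i j : V} (h : s(i, j) ∈ P) : HBase G P T (.c i) (.d j)
  | dd {i j : V} {t : Finset V} (ht : t ∈ T) (hi : i ∈ t) (hj : j ∈ t) (hne : i ≠ j) :
      HBase G P T (.d i) (.d j)
  | cc {i j : V} {t : Finset V} (ht : t ∈ T) (hi : i ∈ t) (hj : j ∈ t) (hne : i ≠ j) :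
      HBase G P T (.c i) (.c j)

/-- The graph `H` of the Popular Matching instance built from `(G, P, T)`. -/
def Hgraph {V : Type u} (G : SimpleGraph V) (P : Set (Sym2 V)) (T : Set (Finset V)) :
    SimpleGraph {g : Gad V // Gad.valid G P g} where
  Adj x y := x ≠ y ∧ (HBase G P T x.1 y.1 ∨ HBase G P T y.1 x.1)
  symm := ⟨fun _ _ h => ⟨h.1.symm, h.2.symm⟩⟩
  loopless := ⟨fun _ h => h.1 rfl⟩

/-- The Popular Matching instance (graph together with preference lists) constructed
from a Partitioned Vertex Cover instance `(G, P, T)`.  The field `pref` gives the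
preference lists; all its values on the neighborhoods in `H` are pinned down, except
the ranks that `b i` assigns to the vertices `u^e_i`, which form an arbitrary fixed
bijection onto `{2, …, deg_G(i) + 1}`. -/
structure Reduction (V : Type u) [LinearOrder V] : Type u where
  G : SimpleGraph V
  P : Set (Sym2 V)
  T : Set (Finset V)
  ispvc : IsPVC G P T
  pref : Gad V → Gad V → ℕ
  pref_ab : ∀ i : V, pref (.a i) (.b i) = 1
  pref_ac : ∀ i : V, pref (.a i) (.c i) = 2
  pref_ad : ∀ i : V, pref (.a i) (.d i) = 3
  pref_ba : ∀ i : V, pref (.b i) (.a i) = 1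
  pref_bu : ∀ i : V, Set.BijOn (pref (.b i)) {g : Gad V | ∃ j : V, G.Adj i j ∧ g = .u i j}
      (Set.Icc 2 ((G.neighborSet i).ncard + 1))
  pref_bc : ∀ i : V, pref (.b i) (.c i) = (G.neighborSet i).ncard + 2
  pref_ca : ∀ i : V, pref (.c i) (.a i) = 1
  pref_cb : ∀ i : V, pref (.c i) (.b i) = 2
  pref_da : ∀ i : V, pref (.d i) (.a i) = 1
  pref_uu : ∀ i j : V, G.Adj i j → pref (.u i j) (.u j i) = 1
  pref_ub : ∀ i j : V, G.Adj i j → pref (.u i j) (.b i) = 2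
  pref_cf : ∀ i j : V, s(i, j) ∈ P → pref (.c i) (.f j i) = 3
  pref_cd : ∀ i j : V, s(i, j) ∈ P → pref (.c i) (.d j) = 4
  pref_dc : ∀ i j : V, s(i, j) ∈ P → pref (.d i) (.c j) = 2
  pref_df : ∀ i j : V, s(i, j) ∈ P → pref (.d i) (.f i j) = 3
  pref_fd : ∀ i j : V, s(i, j) ∈ P → pref (.f i j) (.d i) = 1
  pref_fc : ∀ i j : V, s(i, j) ∈ P → pref (.f i j) (.c j) = 2
  pref_tri : ∀ t ∈ T, ∀ i j k : V, t = {i, j, k} → i < j → j < k →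
    pref (.c i) (.c k) = 3 ∧ pref (.c i) (.c j) = 4 ∧
    pref (.c j) (.c i) = 3 ∧ pref (.c j) (.c k) = 4 ∧
    pref (.c k) (.c j) = 3 ∧ pref (.c k) (.c i) = 4 ∧
    pref (.d i) (.d j) = 2 ∧ pref (.d i) (.d k) = 3 ∧
    pref (.d j) (.d k) = 2 ∧ pref (.d j) (.d i) = 3 ∧
    pref (.d k) (.d i) = 2 ∧ pref (.d k) (.d j) = 3

namespace Reduction

variable {V : Type u} [LinearOrder V] (R : Reduction V)

/-- The vertex set of `H`. -/
abbrev HV : Type u := {g : Gad V // Gad.valid R.G R.P g}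

/-- The graph `H`. -/
def H : SimpleGraph R.HV := Hgraph R.G R.P R.T

/-- The preference lists of `H`, as a function on its vertices. -/
def prefH : R.HV → R.HV → ℕ := fun x y => R.pref x.1 y.1

/-- The vertex `a_i` of `H`. -/
def va (i : V) : R.HV := ⟨.a i, trivial⟩
/-- The vertex `b_i` of `H`. -/
def vb (i : V) : R.HV := ⟨.b i, trivial⟩
/-- The vertex `c_i` of `H`. -/
def vc (i : V) : R.HV := ⟨.c i, trivial⟩
/-- The vertex `d_i` of `H`. -/
def vd (i : V) : R.HV := ⟨.d i, trivial⟩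
/-- The vertex `u^e_i` of `H`, for an edge `e = {i,j}` of `G`. -/
def vu (i j : V) (h : R.G.Adj i j) : R.HV := ⟨.u i j, h⟩
/-- The vertex `f_{ij}` of `H`, for a pair `{i,j} ∈ P`. -/
def vf (i j : V) (h : s(i, j) ∈ R.P) : R.HV := ⟨.f i j, h⟩

/-- The matching `M*` in `H` constructed from a solution `U`. -/
def Mstar (U : Set V) : Set (Sym2 R.HV) :=
  {e : Sym2 R.HV |
    (∃ (i j : V) (h : R.G.Adj i j), e = s(R.vu i j h, R.vu j i h.symm)) ∨
    (∃ (x y : V) (h : s(x, y) ∈ R.P) (h' : s(y, x) ∈ R.P), x ∉ U ∧ y ∈ U ∧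
      (e = s(R.va x, R.vd x) ∨ e = s(R.vb x, R.vc x) ∨ e = s(R.va y, R.vb y) ∨
       e = s(R.vf x y h, R.vc y) ∨ e = s(R.vf y x h', R.vd y))) ∨
    (∃ t ∈ R.T, ∃ x y z : V, t = {x, y, z} ∧ x ∉ U ∧ y ∈ U ∧ z ∈ U ∧ y ≠ z ∧
      R.pref (.d x) (.d y) < R.pref (.d x) (.d z) ∧
      (e = s(R.va x, R.vd x) ∨ e = s(R.vb x, R.vc x) ∨ e = s(R.va y, R.vb y) ∨
       e = s(R.va z, R.vb z) ∨ e = s(R.vc y, R.vc z) ∨ e = s(R.vd y, R.vd z)))}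

end Reduction

/-- The vertex set of the Pair Selector gadget associated with a pair `{i,j}`. -/
def pairGadget {V : Type u} (i j : V) : Set (Gad V) :=
  {g : Gad V | ∃ x : V, (x = i ∨ x = j) ∧ (g = .a x ∨ g = .b x ∨ g = .c x ∨ g = .d x)} ∪
    {Gad.f i j, Gad.f j i}

/-- The vertex set of the Triple Selector gadget associated with a triple `t`. -/
def tripleGadget {V : Type u} (t : Finset V) : Set (Gad V) :=
  {g : Gad V | ∃ x ∈ t, g = .a x ∨ g = .b x ∨ g = .c x ∨ g = .d x}

/-- The vertices of the graph built from a 3-SAT instance: `v x b` is the vertex of the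
literal on variable `x` with polarity `b`; `u c x b` is the vertex `u^C_ℓ` for the clause
`c = C` and the literal `ℓ = (x, b) ∈ C`. -/
inductive RVert (X : Type u) : Type u where
  | v : X → Bool → RVert X
  | u : Finset (X × Bool) → X → Bool → RVert X
deriving DecidableEq

/-- Which formal vertices are really vertices of the reduction graph. -/
def RVert.valid {X : Type u} (C : Finset (Finset (X × Bool))) : RVert X → Prop
  | .v _ _ => True
  | .u c x b => c ∈ C ∧ (x, b) ∈ c

/-- The edges of the reduction graph, up to symmetry. -/
def satAdj {X : Type u} : RVert X → RVert X → Prop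
  | .v x b, .v x' b' => x = x' ∧ b ≠ b'
  | .u c x b, .u c' x' b' => c = c' ∧ (x, b) ≠ (x', b')
  | .u _ x b, .v x' b' => x = x' ∧ b = b'
  | .v x b, .u _ x' b' => x = x' ∧ b = b'

/-- The vertex set of the reduction graph built from a 3-SAT instance. -/
def SATVert (X : Type u) (C : Finset (Finset (X × Bool))) : Type u :=
  {r : RVert X // RVert.valid C r}

/-- The reduction graph `G` built from a 3-SAT instance. -/
def SATgraph (X : Type u) (C : Finset (Finset (X × Bool))) : SimpleGraph (SATVert X C) where
  Adj a b := a ≠ b ∧ (satAdj a.1 b.1 ∨ satAdj b.1 a.1)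
  symm := ⟨fun _ _ h => ⟨h.1.symm, h.2.symm⟩⟩
  loopless := ⟨fun _ h => h.1 rfl⟩

/-- The truth assignment `α` satisfies every clause of `C`. -/
def Satisfies {X : Type u} (α : X → Bool) (C : Finset (Finset (X × Bool))) : Prop :=
  ∀ c ∈ C, ∃ l ∈ c, α l.1 = l.2

/-- The collection `𝒫` of pairs `{v_x, v_x̄}` in the reduction graph. -/
def SATPairs (X : Type u) (C : Finset (Finset (X × Bool))) : Set (Sym2 (SATVert X C)) :=
  {e : Sym2 (SATVert X C) |
    ∃ x : X, e = s((⟨.v x true, trivial⟩ : SATVert X C), (⟨.v x false, trivial⟩ : SATVert X C))}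

/-- The collection `𝒯` of triples `{u^C_p, u^C_q, u^C_r}` in the reduction graph. -/
def SATTriples (X : Type u) [DecidableEq X] (C : Finset (Finset (X × Bool))) :
    Set (Finset (SATVert X C)) :=
  {t : Finset (SATVert X C) |
    ∃ c ∈ C, ∀ r : SATVert X C, r ∈ t ↔ ∃ l ∈ c, r.1 = RVert.u c l.1 l.2}

section SATAux

variable {X : Type u} [Fintype X] [DecidableEq X] {C : Finset (Finset (X × Bool))}

private def rvToSum : RVert X → (X × Bool) ⊕ (Finset (X × Bool) × X × Bool)
  | .v x b => .inl (x, b)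
  | .u c x b => .inr (c, x, b)

instance : Finite (RVert X) := by
  apply Finite.of_injective (rvToSum (X := X))
  rintro (⟨x, b⟩ | ⟨c, x, b⟩) (⟨x', b'⟩ | ⟨c', x', b'⟩) h <;>
    simp_all [rvToSum]

instance : Finite (SATVert X C) := Subtype.finite

/-- The pair of literal vertices of a variable. -/
def pairOf (C : Finset (Finset (X × Bool))) (x : X) : Sym2 (SATVert X C) :=
  s((⟨.v x true, trivial⟩ : SATVert X C), (⟨.v x false, trivial⟩ : SATVert X C))

/-- The triple of clause vertices of a clause. -/
def tripOf {c : Finset (X × Bool)} (hc : c ∈ C) : Finset (SATVert X C) :=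
  c.attach.map ⟨fun l => ⟨.u c l.1.1 l.1.2, hc, by simpa using l.2⟩, by
    rintro ⟨⟨a, b⟩, _⟩ ⟨⟨a', b'⟩, _⟩ h
    have h' := congrArg Subtype.val h
    simp only [RVert.u.injEq] at h'
    simp [h'.2.1, h'.2.2]⟩

lemma mem_tripOf {c : Finset (X × Bool)} (hc : c ∈ C) (r : SATVert X C) :
    r ∈ tripOf hc ↔ ∃ l ∈ c, r.1 = RVert.u c l.1 l.2 := by
  constructor
  · rintro hr
    simp only [tripOf, Finset.mem_map, Finset.mem_attach, Function.Embedding.coeFn_mk,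
      true_and] at hr
    obtain ⟨⟨l, hl⟩, rfl⟩ := hr
    exact ⟨l, hl, rfl⟩
  · rintro ⟨l, hl, h1⟩
    simp only [tripOf, Finset.mem_map, Finset.mem_attach, Function.Embedding.coeFn_mk,
      true_and]
    exact ⟨⟨l, hl⟩, (Subtype.ext h1).symm⟩

lemma mem_SATTriples {t : Finset (SATVert X C)} :
    t ∈ SATTriples X C ↔ ∃ c : Finset (X × Bool), ∃ hc : c ∈ C, t = tripOf hc := by
  constructor
  · rintro ⟨c, hc, hmem⟩
    refine ⟨c, hc, Finset.ext fun r => ?_⟩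
    rw [hmem r, mem_tripOf]
  · rintro ⟨c, hc, rfl⟩
    exact ⟨c, hc, fun r => mem_tripOf hc r⟩


/-- The pair/triple that a vertex belongs to. -/
def partOf : SATVert X C → X ⊕ {c // c ∈ C} := fun r =>
  match r with
  | ⟨.v x _, _⟩ => Sum.inl x
  | ⟨.u c _ _, h⟩ => Sum.inr ⟨c, h.1⟩

lemma svext {a b : RVert X} {ha : RVert.valid C a} {hb : RVert.valid C b} :
    (⟨a, ha⟩ : SATVert X C) = ⟨b, hb⟩ ↔ a = b := by
  constructor
  · intro h; exact congrArg Subtype.val h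
  · rintro rfl; rfl

lemma partOf_eq_inl {r : SATVert X C} {x : X} :
    partOf r = Sum.inl x ↔ r ∈ pairOf C x := by
  obtain ⟨r, hr⟩ := r
  cases r with
  | v x' b =>
    constructor
    · intro h
      have hx : x' = x := by simpa [partOf] using h
      subst hx
      rw [pairOf]
      refine Sym2.mem_iff.mpr ?_
      cases b
      · right; rfl
      · left; rfl
    · intro h
      rw [pairOf] at h
      rcases Sym2.mem_iff.mp h with h | h <;>
      · have h2 := congrArg Subtype.val h
        simp only [RVert.v.injEq] at h2
        simp [partOf, h2.1]
  | u c x' b =>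
    apply iff_of_false
    · simp [partOf]
    · rw [pairOf]
      intro h
      rcases Sym2.mem_iff.mp h with h | h <;> simpa using congrArg Subtype.val h

lemma partOf_eq_inr {r : SATVert X C} {c : Finset (X × Bool)} (hc : c ∈ C) :
    partOf r = Sum.inr ⟨c, hc⟩ ↔ r ∈ tripOf hc := by
  obtain ⟨r, hr⟩ := r
  cases r with
  | v x' b => refine Iff.trans ?_ (mem_tripOf hc _).symm; simp [partOf]
  | u c' x' b =>
    refine Iff.trans ?_ (mem_tripOf hc _).symm
    simp only [partOf, Sum.inr.injEq, Subtype.mk.injEq]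
    constructor
    · rintro rfl
      exact ⟨(x', b), hr.2, rfl⟩
    · rintro ⟨l, hl, h⟩
      simp only [RVert.u.injEq] at h
      exact h.1

lemma adj_pair (x : X) :
    (SATgraph X C).Adj ⟨.v x true, trivial⟩ ⟨.v x false, trivial⟩ := by
  change _ ≠ _ ∧ (satAdj _ _ ∨ satAdj _ _)
  refine ⟨fun h => by simpa using congrArg Subtype.val h, Or.inl ?_⟩
  simp [satAdj]

lemma adj_trip {c : Finset (X × Bool)} (hc : c ∈ C) {r r' : SATVert X C}
    (h1 : r ∈ tripOf hc) (h2 : r' ∈ tripOf hc) (hne : r ≠ r') :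
    (SATgraph X C).Adj r r' := by
  obtain ⟨l, hl, hrl⟩ := (mem_tripOf hc r).1 h1
  obtain ⟨l', hl', hrl'⟩ := (mem_tripOf hc r').1 h2
  change _ ≠ _ ∧ (satAdj _ _ ∨ satAdj _ _)
  refine ⟨hne, Or.inl ?_⟩
  rw [hrl, hrl']
  refine ⟨by trivial, ?_⟩
  intro h
  apply hne
  apply Subtype.ext
  rw [hrl, hrl']
  simp only [Prod.mk.injEq] at h
  rw [h.1, h.2]


lemma sum_lb :
    (∑ y : X ⊕ {c // c ∈ C}, Sum.elim (fun _ : X => 1) (fun _ => 2) y)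
      = Fintype.card X + 2 * C.card := by
  rw [Fintype.sum_sum_type]
  simp [Finset.card_univ, Fintype.card_coe, mul_comm]

lemma pair_ncard_eq (x : X) (S : Set (SATVert X C)) :
    {r | r ∈ pairOf C x ∧ r ∈ S}.ncard
      = ((Set.toFinite S).toFinset.filter (fun r => partOf r = Sum.inl x)).card := by
  rw [← Set.ncard_coe_finset]
  congr 1
  ext r
  simp only [Set.mem_setOf_eq, Finset.coe_filter, Set.Finite.mem_toFinset]
  rw [partOf_eq_inl, and_comm]

lemma trip_ncard_eq {c : Finset (X × Bool)} (hc : c ∈ C) (S : Set (SATVert X C)) :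
    {r | r ∈ tripOf hc ∧ r ∈ S}.ncard
      = ((Set.toFinite S).toFinset.filter
          (fun r => partOf r = Sum.inr (⟨c, hc⟩ : {c // c ∈ C}))).card := by
  rw [← Set.ncard_coe_finset]
  congr 1
  ext r
  simp only [Set.mem_setOf_eq, Finset.coe_filter, Set.Finite.mem_toFinset]
  rw [partOf_eq_inr, and_comm]

lemma fibers_eq (hC : ∀ c ∈ C, c.card = 3) {S : Set (SATVert X C)}
    (hVC : IsVC (SATgraph X C) S)
    (hcard : S.ncard ≤ Fintype.card X + 2 * C.card) :
    ∀ y : X ⊕ {c // c ∈ C},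
      ((Set.toFinite S).toFinset.filter (fun r => partOf r = y)).card
        = Sum.elim (fun _ : X => 1) (fun _ => 2) y := by
  set S' := (Set.toFinite S).toFinset with hS'def
  have hmem : ∀ r, r ∈ S' ↔ r ∈ S := fun r => Set.Finite.mem_toFinset _
  have hsum : S'.card = ∑ y : X ⊕ {c // c ∈ C}, (S'.filter (fun r => partOf r = y)).card :=
    Finset.card_eq_sum_card_fiberwise (fun r _ => Finset.mem_univ _)
  have hlb : ∀ y ∈ (Finset.univ : Finset (X ⊕ {c // c ∈ C})),
      Sum.elim (fun _ : X => 1) (fun _ => 2) y ≤ (S'.filter (fun r => partOf r = y)).card := by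
    rintro (x | ⟨c, hc⟩) -
    · rcases hVC (adj_pair (C := C) x) with h | h
      · exact Finset.card_pos.mpr ⟨_, Finset.mem_filter.mpr
          ⟨(hmem _).mpr h, partOf_eq_inl.mpr (Sym2.mem_mk_left _ _)⟩⟩
      · exact Finset.card_pos.mpr ⟨_, Finset.mem_filter.mpr
          ⟨(hmem _).mpr h, partOf_eq_inl.mpr (Sym2.mem_mk_right _ _)⟩⟩
    · obtain ⟨l1, l2, l3, h12, h13, h23, hceq⟩ := Finset.card_eq_three.mp (hC c hc)
      have hl1 : l1 ∈ c := by rw [hceq]; simp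
      have hl2 : l2 ∈ c := by rw [hceq]; simp
      have hl3 : l3 ∈ c := by rw [hceq]; simp
      set r1 : SATVert X C := ⟨.u c l1.1 l1.2, hc, by simpa using hl1⟩ with hr1
      set r2 : SATVert X C := ⟨.u c l2.1 l2.2, hc, by simpa using hl2⟩ with hr2
      set r3 : SATVert X C := ⟨.u c l3.1 l3.2, hc, by simpa using hl3⟩ with hr3
      have ht1 : r1 ∈ tripOf hc := (mem_tripOf hc r1).mpr ⟨l1, hl1, rfl⟩
      have ht2 : r2 ∈ tripOf hc := (mem_tripOf hc r2).mpr ⟨l2, hl2, rfl⟩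
      have ht3 : r3 ∈ tripOf hc := (mem_tripOf hc r3).mpr ⟨l3, hl3, rfl⟩
      have hkey : ∀ {a b : X × Bool} {pa pb}, a ≠ b →
          (⟨.u c a.1 a.2, pa⟩ : SATVert X C) ≠ ⟨.u c b.1 b.2, pb⟩ := by
        intro a b pa pb hab h
        have h2 := congrArg Subtype.val h
        simp only [RVert.u.injEq] at h2
        exact hab (Prod.ext h2.2.1 h2.2.2)
      have hne12 : r1 ≠ r2 := hkey h12
      have hne13 : r1 ≠ r3 := hkey h13
      have hne23 : r2 ≠ r3 := hkey h23
      have h2mem : ∃ a b : SATVert X C, a ≠ b ∧ a ∈ S ∧ b ∈ S ∧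
          a ∈ tripOf hc ∧ b ∈ tripOf hc := by
        rcases hVC (adj_trip hc ht1 ht2 hne12) with h1 | h1 <;>
          rcases hVC (adj_trip hc ht2 ht3 hne23) with h2 | h2
        · exact ⟨r1, r2, hne12, h1, h2, ht1, ht2⟩
        · exact ⟨r1, r3, hne13, h1, h2, ht1, ht3⟩
        · rcases hVC (adj_trip hc ht1 ht3 hne13) with h3 | h3
          · exact ⟨r1, r2, hne12, h3, h1, ht1, ht2⟩
          · exact ⟨r2, r3, hne23, h1, h3, ht2, ht3⟩
        · exact ⟨r2, r3, hne23, h1, h2, ht2, ht3⟩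
      obtain ⟨a, b, hab, haS, hbS, hat, hbt⟩ := h2mem
      exact Finset.one_lt_card.mpr ⟨a, Finset.mem_filter.mpr
          ⟨(hmem _).mpr haS, (partOf_eq_inr hc).mpr hat⟩, b, Finset.mem_filter.mpr
          ⟨(hmem _).mpr hbS, (partOf_eq_inr hc).mpr hbt⟩, hab⟩
  have hnc : S.ncard = S'.card := Set.ncard_eq_toFinset_card _ (Set.toFinite S)
  have heq : (∑ y : X ⊕ {c // c ∈ C}, Sum.elim (fun _ : X => 1) (fun _ => 2) y)
      = ∑ y : X ⊕ {c // c ∈ C}, (S'.filter (fun r => partOf r = y)).card := by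
    refine le_antisymm (Finset.sum_le_sum hlb) ?_
    rw [← hsum, sum_lb]
    exact hnc ▸ hcard
  intro y
  exact ((Finset.sum_eq_sum_iff_of_le hlb).1 heq y (Finset.mem_univ y)).symm

lemma sol_card {U : Set (SATVert X C)}
    (hsol : IsPVCSolution (SATgraph X C) (SATPairs X C) (SATTriples X C) U) :
    U.ncard = Fintype.card X + 2 * C.card := by
  set U' := (Set.toFinite U).toFinset with hU'def
  have hsum : U'.card = ∑ y : X ⊕ {c // c ∈ C}, (U'.filter (fun r => partOf r = y)).card :=
    Finset.card_eq_sum_card_fiberwise (fun r _ => Finset.mem_univ _)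
  have hfib : ∀ y : X ⊕ {c // c ∈ C},
      (U'.filter (fun r => partOf r = y)).card = Sum.elim (fun _ : X => 1) (fun _ => 2) y := by
    rintro (x | ⟨c, hc⟩)
    · have h := hsol.2.1 (pairOf C x) ⟨x, rfl⟩
      rw [pair_ncard_eq] at h
      exact h
    · have h := hsol.2.2 (tripOf hc) (mem_SATTriples.mpr ⟨c, hc, rfl⟩)
      rw [trip_ncard_eq] at h
      exact h
  rw [Set.ncard_eq_toFinset_card _ (Set.toFinite U), hsum]
  simp only [hfib]
  exact sum_lb

end SATAux

/-- The output of the classic reduction from 3-SAT to Vertex Cover is a valid instance of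
Partitioned Vertex Cover, and the reduction graph has a vertex cover of size at most
`k = |X| + 2|C|` if and only if the Partitioned Vertex Cover instance has a solution. -/
theorem sat_reduction_is_pvc {X : Type u} [Fintype X] [DecidableEq X]
    (C : Finset (Finset (X × Bool))) (hC : ∀ c ∈ C, c.card = 3) :
    IsPVC (SATgraph X C) (SATPairs X C) (SATTriples X C) ∧
      ((∃ S : Set (SATVert X C), S.Finite ∧ S.ncard ≤ Fintype.card X + 2 * C.card ∧
          IsVC (SATgraph X C) S) ↔
        (∃ U : Set (SATVert X C),
          IsPVCSolution (SATgraph X C) (SATPairs X C) (SATTriples X C) U)) := by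
  constructor
  · refine ⟨inferInstance, ?_, ?_, ?_, ?_, ?_, ?_, ?_⟩
    · -- P ⊆ edgeSet
      rintro e ⟨x, rfl⟩
      exact (SATgraph X C).mem_edgeSet.mpr (adj_pair x)
    · -- pairs disjoint
      rintro e ⟨x, rfl⟩ e' ⟨x', rfl⟩ hne v hv hv'
      have hx : partOf v = Sum.inl x := partOf_eq_inl.mpr hv
      have hx' : partOf v = Sum.inl x' := partOf_eq_inl.mpr hv'
      rw [hx] at hx'
      obtain rfl : x = x' := by injection hx'
      exact hne rfl
    · -- triples card 3
      intro t ht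
      obtain ⟨c, hc, rfl⟩ := mem_SATTriples.mp ht
      rw [tripOf, Finset.card_map, Finset.card_attach]
      exact hC c hc
    · -- triangles
      intro t ht x hx y hy hne
      obtain ⟨c, hc, rfl⟩ := mem_SATTriples.mp ht
      exact adj_trip hc hx hy hne
    · -- triples disjoint
      intro t ht t' ht' hne v hv hv'
      obtain ⟨c, hc, rfl⟩ := mem_SATTriples.mp ht
      obtain ⟨c', hc', rfl⟩ := mem_SATTriples.mp ht'
      obtain ⟨l, hl, h1⟩ := (mem_tripOf hc v).1 hv
      obtain ⟨l', hl', h2⟩ := (mem_tripOf hc' v).1 hv'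
      rw [h1] at h2
      simp only [RVert.u.injEq] at h2
      obtain rfl := h2.1
      exact hne rfl
    · -- every vertex covered
      rintro ⟨r, hr⟩
      cases r with
      | v x b =>
        refine Or.inl ⟨pairOf C x, ⟨x, rfl⟩, ?_⟩
        rw [pairOf]
        refine Sym2.mem_iff.mpr ?_
        cases b
        · right; rfl
        · left; rfl
      | u c x b =>
        exact Or.inr ⟨tripOf hr.1, mem_SATTriples.mpr ⟨c, hr.1, rfl⟩,
          (mem_tripOf hr.1 _).mpr ⟨(x, b), hr.2, rfl⟩⟩
    · -- not both
      rintro v ⟨⟨e, ⟨x, rfl⟩, hv1⟩, ⟨t, ht, hv2⟩⟩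
      obtain ⟨c, hc, rfl⟩ := mem_SATTriples.mp ht
      obtain ⟨l, hl, h1⟩ := (mem_tripOf hc v).1 hv2
      rcases Sym2.mem_iff.mp hv1 with h | h <;>
      · rw [h] at h1
        simp at h1
  · constructor
    · rintro ⟨S, _, hcard, hVC⟩
      have hf := fibers_eq hC hVC hcard
      refine ⟨S, hVC, ?_, ?_⟩
      · rintro e ⟨x, rfl⟩
        exact (pair_ncard_eq x S).trans (hf (Sum.inl x))
      · intro t ht
        obtain ⟨c, hc, rfl⟩ := mem_SATTriples.mp ht
        exact (trip_ncard_eq hc S).trans (hf (Sum.inr ⟨c, hc⟩))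
    · rintro ⟨U, hsol⟩
      exact ⟨U, Set.toFinite U, (sol_card hsol).le, hsol.1⟩
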